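/- For every integer m ≥ 1 and every constant c_A with 0 < c_A < 1, there exist an integer n_l > m and unit vectors l_1,…,l_{n_l} ∈ ℝ^m such that: (1) every subfamily of m of the vectors l_1,…,l_{n_l} is linearly independent; and (2) for every unit vector l_0 ∈ ℝ^m, the index set S = { i ∈ {1,…,n_l} : ⟨l_i, l_0⟩ ≥ c_A } has at least m elements, and l_0 is a linear combination with nonnegative coefficients of the vectors { l_i : i ∈ S }. -/

import Mathlib

open scoped RealInnerProductSpace

section Avoid

variable {V : Type*} [NormedAddCommGroup V] [NormedSpace ℝ V] [Nontrivial V]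

lemma exists_not_mem_subspaces (F : Finset (Submodule ℝ V)) (hF : ∀ W ∈ F, W ≠ ⊤) :
    ∃ d : V, ∀ W ∈ F, d ∉ W := by
  have h := Subspace.biUnion_ne_univ_of_top_notMem (s := F) (fun hT => hF ⊤ hT rfl)
  rw [Set.ne_univ_iff_exists_notMem] at h
  obtain ⟨d, hd⟩ := h
  exact ⟨d, fun W hW hdW => hd (Set.mem_biUnion hW hdW)⟩

lemma exists_near_avoiding (F : Finset (Submodule ℝ V)) (hF : ∀ W ∈ F, W ≠ ⊤)
    (x : V) (r : ℝ) (hr : 0 < r) :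
    ∃ z : V, ‖z - x‖ < r ∧ ∀ W ∈ F, z ∉ W := by
  classical
  obtain ⟨d, hd⟩ := exists_not_mem_subspaces (insert ⊥ F)
    (by
      intro W hW
      rcases Finset.mem_insert.1 hW with h | h
      · subst h; exact bot_ne_top
      · exact hF W h)
  have hd0 : d ≠ 0 := fun h => hd ⊥ (Finset.mem_insert_self _ _) (by simp [h])
  have hdn : 0 < ‖d‖ := norm_pos_iff.2 hd0
  -- bad parameter set
  set B : Set ℝ := ⋃ W ∈ F, {t : ℝ | x + t • d ∈ W} with hB
  have hBfin : B.Finite := by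
    apply Set.Finite.biUnion F.finite_toSet
    intro W hW
    apply Set.Subsingleton.finite
    intro t ht t' ht' 
    by_contra hne
    have hmem : (t - t') • d ∈ W := by
      have := W.sub_mem ht ht'
      simpa [sub_smul] using (by simpa using this : (x + t • d) - (x + t' • d) ∈ W)
    have : d ∈ W := by
      have := W.smul_mem (t - t')⁻¹ hmem
      rwa [smul_smul, inv_mul_cancel₀ (sub_ne_zero.2 hne), one_smul] at this
    exact hd W (Finset.mem_insert_of_mem hW) this
  have hIoo : (Set.Ioo (0:ℝ) (r / ‖d‖)).Infinite := Set.Ioo_infinite (by positivity)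
  obtain ⟨t, ht⟩ := (hIoo.diff hBfin).nonempty
  refine ⟨x + t • d, ?_, ?_⟩
  · have ht1 : 0 < t := ht.1.1
    have ht2 : t < r / ‖d‖ := ht.1.2
    have : ‖x + t • d - x‖ = t * ‖d‖ := by
      simp [norm_smul, abs_of_pos ht1]
    rw [this]
    calc t * ‖d‖ < (r / ‖d‖) * ‖d‖ := by gcongr
    _ = r := div_mul_cancel₀ _ (ne_of_gt hdn)
  · intro W hW hmem
    exact ht.2 (Set.mem_biUnion hW hmem)

lemma exists_unit_near_avoiding (F : Finset (Submodule ℝ V)) (hF : ∀ W ∈ F, W ≠ ⊤)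
    (x : V) (hx : ‖x‖ = 1) (r : ℝ) (hr : 0 < r) (hr1 : r ≤ 1) :
    ∃ y : V, ‖y‖ = 1 ∧ ‖y - x‖ ≤ r ∧ ∀ W ∈ F, y ∉ W := by
  obtain ⟨z, hz, hzF⟩ := exists_near_avoiding F hF x (r/2) (by positivity)
  have hz1 : |‖z‖ - 1| < r / 2 := by
    calc |‖z‖ - 1| = |‖z‖ - ‖x‖| := by rw [hx]
    _ ≤ ‖z - x‖ := abs_norm_sub_norm_le _ _
    _ < r / 2 := hz
  have hzpos : 0 < ‖z‖ := by
    have := abs_lt.1 hz1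
    linarith [this.1, hr1]
  refine ⟨‖z‖⁻¹ • z, ?_, ?_, ?_⟩
  · rw [norm_smul, norm_inv, norm_norm, inv_mul_cancel₀ (ne_of_gt hzpos)]
  · have h1 : ‖‖z‖⁻¹ • z - z‖ = |‖z‖ - 1| := by
      rw [show ‖z‖⁻¹ • z - z = (‖z‖⁻¹ - 1) • z by rw [sub_smul, one_smul]]
      rw [norm_smul, Real.norm_eq_abs]
      rw [show ‖z‖⁻¹ - 1 = (1 - ‖z‖)/‖z‖ by field_simp]
      rw [abs_div, abs_of_pos hzpos, div_mul_cancel₀ _ (ne_of_gt hzpos), abs_sub_comm]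
    calc ‖‖z‖⁻¹ • z - x‖ ≤ ‖‖z‖⁻¹ • z - z‖ + ‖z - x‖ := norm_sub_le_norm_sub_add_norm_sub _ _ _
    _ ≤ r/2 + r/2 := by rw [h1]; exact add_le_add hz1.le hz.le
    _ = r := by ring
  · intro W hW hmem
    apply hzF W hW
    have := W.smul_mem ‖z‖ hmem
    rwa [smul_smul, mul_inv_cancel₀ (ne_of_gt hzpos), one_smul] at this

end Avoid


section Net
variable {V : Type*} [NormedAddCommGroup V] [NormedSpace ℝ V] [ProperSpace V]

lemma exists_net (δ : ℝ) (hδ : 0 < δ) :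
    ∃ T : Finset V, (∀ x ∈ T, ‖x‖ = 1) ∧
      ∀ w : V, ‖w‖ = 1 → ∃ x ∈ T, ‖x - w‖ ≤ δ := by
  classical
  have hcov : Metric.sphere (0:V) 1 ⊆ ⋃ x ∈ Metric.sphere (0:V) 1, Metric.ball x δ := by
    intro w hw
    exact Set.mem_biUnion hw (Metric.mem_ball_self hδ)
  obtain ⟨b', hb'sub, hb'fin, hb'cov⟩ :=
    (isCompact_sphere (0:V) 1).elim_finite_subcover_image
      (fun x _ => Metric.isOpen_ball) hcov
  refine ⟨hb'fin.toFinset, ?_, ?_⟩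
  · intro x hx
    have := hb'sub (hb'fin.mem_toFinset.1 hx)
    simpa [mem_sphere_zero_iff_norm] using this
  · intro w hw
    have := hb'cov (by simpa [mem_sphere_zero_iff_norm] using hw)
    obtain ⟨x, hx, hwx⟩ := Set.mem_iUnion₂.1 this
    exact ⟨x, hb'fin.mem_toFinset.2 hx, by
      rw [← dist_eq_norm, dist_comm]; exact (Metric.mem_ball.1 hwx).le⟩
end Net


section GP
variable {m : ℕ}
local notation "E" => EuclideanSpace ℝ (Fin m)

lemma exists_gp_family (hm : 1 ≤ m) (δ : ℝ) (hδ : 0 < δ) (hδ1 : δ ≤ 1)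
    (T : Finset E) :
    (∀ x ∈ T, ‖x‖ = 1) → ∃ W : Finset E, (∀ v ∈ W, ‖v‖ = 1) ∧
      (∀ x ∈ T, ∃ v ∈ W, ‖v - x‖ ≤ δ) ∧
      (∀ s : Finset E, s ⊆ W → s.card ≤ m →
        LinearIndependent ℝ (fun v : (s : Set E) => (v : E))) := by
  classical
  haveI : Nontrivial E := by
    refine ⟨EuclideanSpace.single ⟨0, hm⟩ 1, 0, ?_⟩
    intro h
    have := congrArg norm h
    simp [EuclideanSpace.norm_single] at this
  induction T using Finset.induction_on with
  | empty =>
      intro _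
      refine ⟨∅, by simp, by simp, ?_⟩
      intro s hs _
      have : s = ∅ := Finset.subset_empty.1 hs
      subst this
      rw [show ((∅ : Finset E) : Set E) = (∅ : Set E) from Finset.coe_empty]
      exact linearIndependent_empty ℝ E
  | @insert x T' hxT' ih =>
      intro hT
      obtain ⟨W', hW'norm, hW'cov, hW'gp⟩ := ih (fun z hz => hT z (Finset.mem_insert_of_mem hz))
      have hxnorm : ‖x‖ = 1 := hT x (Finset.mem_insert_self _ _)
      -- the finitely many spans to avoid
      set F : Finset (Submodule ℝ E) :=
        (W'.powerset.filter (fun s : Finset E => s.card ≤ m - 1)).image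
          (fun s : Finset E => Submodule.span ℝ (s : Set E)) with hF
      have hFproper : ∀ Wsub ∈ F, Wsub ≠ ⊤ := by
        intro Wsub hWsub
        obtain ⟨s, hs, rfl⟩ := Finset.mem_image.1 hWsub
        have hcard := (Finset.mem_filter.1 hs).2
        intro htop
        have h1 : Module.finrank ℝ (Submodule.span ℝ (↑s : Set E)) ≤ s.card :=
          finrank_span_finset_le_card s
        rw [htop] at h1
        have h2 : Module.finrank ℝ (⊤ : Submodule ℝ E) = m := by
          simp [finrank_euclideanSpace_fin]
        omega
      obtain ⟨y, hynorm, hyx, hyF⟩ := exists_unit_near_avoiding F hFproper x hxnorm δ hδ hδ1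
      refine ⟨insert y W', ?_, ?_, ?_⟩
      · intro v hv
        rcases Finset.mem_insert.1 hv with h | h
        · subst h; exact hynorm
        · exact hW'norm v h
      · intro z hz
        rcases Finset.mem_insert.1 hz with h | h
        · subst h; exact ⟨y, Finset.mem_insert_self _ _, hyx⟩
        · obtain ⟨v, hv, hvz⟩ := hW'cov z h
          exact ⟨v, Finset.mem_insert_of_mem hv, hvz⟩
      · intro s hs hcard
        by_cases hys : y ∈ s
        · have herase : s.erase y ⊆ W' := by
            intro z hz
            have hz' := Finset.mem_of_mem_erase hz
            rcases Finset.mem_insert.1 (hs hz') with h | h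
            · exact absurd h (Finset.ne_of_mem_erase hz)
            · exact h
          have hecard : (s.erase y).card ≤ m - 1 := by
            have := Finset.card_erase_of_mem hys
            omega
          have hindep : LinearIndependent ℝ (fun v : ((s.erase y : Finset E) : Set E) => (v : E)) :=
            hW'gp _ herase (le_trans hecard (Nat.sub_le m 1))
          have hnotspan : y ∉ Submodule.span ℝ ((s.erase y : Finset E) : Set E) := by
            apply hyF
            rw [hF]
            exact Finset.mem_image.2 ⟨s.erase y, Finset.mem_filter.2
              ⟨Finset.mem_powerset.2 herase, hecard⟩, rfl⟩
          have := LinearIndepOn.insert (v := id) (linearIndependent_set_coe_iff.1 hindep) (by rwa [Set.image_id])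
          have hseq : (s : Set E) = insert y ((s.erase y : Finset E) : Set E) := by
            rw [← Finset.coe_insert, Finset.insert_erase hys]
          rw [hseq]
          exact linearIndependent_set_coe_iff.2 this
        · apply hW'gp s ?_ hcard
          intro z hz
          rcases Finset.mem_insert.1 (hs hz) with h | h
          · exact absurd (h ▸ hz) hys
          · exact h
end GP


-- numeric helper: (√(1+t²))⁻¹ ≥ 1 - t²/2 for all t
lemma inv_sqrt_one_add_sq_ge (t : ℝ) : 1 - t^2/2 ≤ (Real.sqrt (1 + t^2))⁻¹ := by
  have h1 : (0:ℝ) < 1 + t^2 := by positivity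
  have hs : 0 < Real.sqrt (1 + t^2) := Real.sqrt_pos.2 h1
  have hs2 : (Real.sqrt (1 + t^2))^2 = 1 + t^2 := Real.sq_sqrt h1.le
  rcases le_or_gt (1 - t^2/2) 0 with h | h
  · exact le_trans h (by positivity)
  · set S := Real.sqrt (1 + t^2)
    have hsq : ((1 - t^2/2) * S)^2 ≤ 1 := by nlinarith [sq_nonneg t, sq_nonneg (t^2), sq_nonneg (t^3)]
    have hle : (1 - t^2/2) * S ≤ 1 := by nlinarith [mul_pos h hs]
    have heq : (1 - t^2/2) = ((1 - t^2/2) * S) / S := by field_simp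
    rw [heq, ← one_div S]
    gcongr

-- numeric helper: gap for t ↦ t/√(1+t²) on [0,1]
lemma gap_lemma {s t : ℝ} (hs0 : 0 ≤ s) (hst : s ≤ t) (ht1 : t ≤ 1) :
    (t - s)/4 ≤ t * (Real.sqrt (1 + t^2))⁻¹ - s * (Real.sqrt (1 + s^2))⁻¹ := by
  have h1t : (0:ℝ) < 1 + t^2 := by positivity
  have h1s : (0:ℝ) < 1 + s^2 := by positivity
  set St := Real.sqrt (1 + t^2) with hSt
  set Ss := Real.sqrt (1 + s^2) with hSs
  have hStpos : 0 < St := Real.sqrt_pos.2 h1t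
  have hSspos : 0 < Ss := Real.sqrt_pos.2 h1s
  have hSt2 : St^2 = 1 + t^2 := Real.sq_sqrt h1t.le
  have hSs2 : Ss^2 = 1 + s^2 := Real.sq_sqrt h1s.le
  have hs1 : s ≤ 1 := hst.trans ht1
  have hStle : St ≤ 3/2 := by nlinarith
  have hSsle : Ss ≤ 3/2 := by nlinarith
  have hStge : 1 ≤ St := by nlinarith [sq_nonneg t]
  have hSsge : 1 ≤ Ss := by nlinarith [sq_nonneg s]
  have ht0 : 0 ≤ t := hs0.trans hst
  have heq : t * St⁻¹ - s * Ss⁻¹ = (t * Ss - s * St) / (St * Ss) := by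
    rw [← div_eq_mul_inv, ← div_eq_mul_inv, div_sub_div _ _ hStpos.ne' hSspos.ne',
      mul_comm St s]
  rw [heq]
  rcases eq_or_lt_of_le ht0 with h | htpos
  · have hteq : t = 0 := h.symm
    have hseq : s = 0 := le_antisymm (hteq ▸ hst) hs0
    simp [hteq, hseq]
  · have htspos : 0 < t + s := by linarith
    have hdiff : (t*Ss - s*St) * (t*Ss + s*St) = (t - s) * (t + s) := by
      linear_combination t^2*hSs2 - s^2*hSt2
    have hABpos : 0 < t*Ss + s*St := by positivity
    have hABnn : 0 ≤ t*Ss - s*St := by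
      rw [← mul_nonneg_iff_of_pos_right hABpos, hdiff]
      exact mul_nonneg (by linarith) htspos.le
    have hsum : t*Ss + s*St ≤ (3/2) * (t + s) := by
      nlinarith [mul_le_mul_of_nonneg_left hSsle ht0, mul_le_mul_of_nonneg_left hStle hs0]
    have hlow : (2/3) * (t - s) ≤ t*Ss - s*St := by
      nlinarith [mul_nonneg hABnn (by linarith : (0:ℝ) ≤ (3/2)*(t+s) - (t*Ss + s*St))]
    have hprod : St * Ss ≤ 9/4 := by nlinarith
    have hprodpos : 0 < St * Ss := by positivity
    have h2 : (t*Ss - s*St)/(9/4:ℝ) ≤ (t*Ss - s*St)/(St*Ss) := by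
      gcongr
    calc (t - s)/4 ≤ ((2/3)*(t-s)) / (9/4:ℝ) := by linarith
    _ ≤ (t*Ss - s*St) / (9/4:ℝ) := by linarith
    _ ≤ (t*Ss - s*St)/(St*Ss) := h2


section Orth
variable {m : ℕ}
local notation "E" => EuclideanSpace ℝ (Fin m)

lemma exists_unit_orthogonal (hm : 2 ≤ m) (l₀ : E) (hl₀ : ‖l₀‖ = 1) :
    ∃ p : E, ‖p‖ = 1 ∧ ⟪l₀, p⟫ = 0 := by
  have hl₀0 : l₀ ≠ 0 := by intro h; rw [h] at hl₀; simp at hl₀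
  have hK : ((ℝ ∙ l₀)ᗮ : Submodule ℝ E) ≠ ⊥ := by
    intro hbot
    have htop : (ℝ ∙ l₀) = ⊤ := by
      rw [← Submodule.orthogonal_orthogonal (ℝ ∙ l₀), hbot, Submodule.bot_orthogonal_eq_top]
    have h1 : Module.finrank ℝ (ℝ ∙ l₀) = 1 := finrank_span_singleton hl₀0
    rw [htop] at h1
    have h2 : Module.finrank ℝ (⊤ : Submodule ℝ E) = m := by
      simp [finrank_euclideanSpace_fin]
    omega
  obtain ⟨q, hq, hq0⟩ := Submodule.exists_mem_ne_zero_of_ne_bot hK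
  have hqperp : ⟪l₀, q⟫ = 0 := by
    have h := (Submodule.mem_orthogonal (ℝ ∙ l₀) q).1 hq l₀ (Submodule.mem_span_singleton_self l₀)
    exact h
  have hqn : 0 < ‖q‖ := norm_pos_iff.2 hq0
  refine ⟨‖q‖⁻¹ • q, ?_, ?_⟩
  · rw [norm_smul, norm_inv, norm_norm, inv_mul_cancel₀ (ne_of_gt hqn)]
  · rw [real_inner_smul_right, hqperp, mul_zero]


lemma count_lemma (hm : 2 ≤ m) (c δ : ℝ) (hδ : 0 < δ)
    (V : Finset E) (hVnet : ∀ w : E, ‖w‖ = 1 → ∃ v ∈ V, ‖v - w‖ ≤ δ)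
    (h1 : 9*δ*(m-1 : ℝ) ≤ 1) (h2 : c + δ + (9*δ*(m-1:ℝ))^2/2 ≤ 1)
    (l₀ : E) (hl₀ : ‖l₀‖ = 1) :
    ∃ g : Fin m → E, Function.Injective g ∧ ∀ k, g k ∈ V ∧ c ≤ ⟪g k, l₀⟫ := by
  classical
  obtain ⟨p, hp, hlp⟩ := exists_unit_orthogonal hm l₀ hl₀
  set t : Fin m → ℝ := fun k => 9*δ*(k:ℕ) with hts
  have ht0 : ∀ k, 0 ≤ t k := fun k => by positivity
  have htmax : ∀ k, t k ≤ 9*δ*(m-1:ℝ) := by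
    intro k
    have : (k:ℕ) ≤ m - 1 := Nat.le_sub_one_of_lt k.2
    have h3 : ((k:ℕ):ℝ) ≤ (m-1:ℝ) := by
      rw [show (m-1:ℝ) = ((m-1:ℕ):ℝ) by push_cast [Nat.cast_sub (by omega : 1 ≤ m)]; ring]
      exact_mod_cast this
    show 9*δ*((k:ℕ):ℝ) ≤ 9*δ*(m-1:ℝ)
    nlinarith
  have ht1 : ∀ k, t k ≤ 1 := fun k => (htmax k).trans h1
  set z : Fin m → E := fun k => (Real.sqrt (1 + (t k)^2))⁻¹ • (l₀ + t k • p) with hzs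
  have hnorm : ∀ k, ‖l₀ + t k • p‖ = Real.sqrt (1 + (t k)^2) := by
    intro k
    have h := norm_add_sq_real l₀ (t k • p)
    rw [hl₀, real_inner_smul_right, hlp, norm_smul, hp] at h
    simp only [mul_zero, mul_one] at h
    have : ‖l₀ + t k • p‖^2 = 1 + (t k)^2 := by
      rw [h]; rw [Real.norm_eq_abs, sq_abs]; ring
    rw [← this, Real.sqrt_sq (norm_nonneg _)]
  have hsqrtpos : ∀ k, 0 < Real.sqrt (1 + (t k)^2) :=
    fun k => Real.sqrt_pos.2 (by positivity)
  have hznorm : ∀ k, ‖z k‖ = 1 := by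
    intro k
    rw [hzs]
    simp only
    rw [norm_smul, hnorm k, norm_inv, Real.norm_eq_abs, abs_of_pos (hsqrtpos k),
      inv_mul_cancel₀ (hsqrtpos k).ne']
  have hzl : ∀ k, ⟪z k, l₀⟫ = (Real.sqrt (1 + (t k)^2))⁻¹ := by
    intro k
    rw [hzs]
    simp only
    have hpl : ⟪p, l₀⟫ = 0 := by rw [real_inner_comm]; exact hlp
    rw [real_inner_smul_left, inner_add_left, real_inner_smul_left,
      real_inner_self_eq_norm_sq, hl₀, hpl]
    ring
  have hzp : ∀ k, ⟪z k, p⟫ = t k * (Real.sqrt (1 + (t k)^2))⁻¹ := by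
    intro k
    rw [hzs]
    simp only
    rw [real_inner_smul_left, inner_add_left, real_inner_smul_left, hlp,
      real_inner_self_eq_norm_sq, hp]
    ring
  -- choose net points
  have hchoice : ∀ k, ∃ v ∈ V, ‖v - z k‖ ≤ δ := fun k => hVnet (z k) (hznorm k)
  choose g hgV hgz using hchoice
  have hsep : ∀ j k : Fin m, (k:ℕ) < (j:ℕ) → 9*δ/4 ≤ ⟪z j - z k, p⟫ := by
    intro j k hjk
    rw [inner_sub_left, hzp, hzp]
    have hgap := gap_lemma (ht0 k) (by
      rw [hts]; simp only
      have : ((k:ℕ):ℝ) ≤ ((j:ℕ):ℝ) := by exact_mod_cast hjk.le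
      nlinarith) (ht1 j)
    have : 9*δ ≤ t j - t k := by
      rw [hts]; simp only
      have : ((k:ℕ):ℝ) + 1 ≤ ((j:ℕ):ℝ) := by exact_mod_cast hjk
      nlinarith
    linarith
  have key : ∀ a b : Fin m, (b:ℕ) < (a:ℕ) → g a = g b → False := by
    intro a b hab hg
    have hs := hsep a b hab
    have hb : (9*δ/4 : ℝ) ≤ ‖z a - z b‖ := le_trans hs (by
      calc ⟪z a - z b, p⟫ ≤ ‖z a - z b‖ * ‖p‖ := real_inner_le_norm _ _
      _ = ‖z a - z b‖ := by rw [hp, mul_one])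
    have hub : ‖z a - z b‖ ≤ 2*δ := by
      calc ‖z a - z b‖ = ‖(z a - g a) + (g b - z b)‖ := by rw [hg]; abel_nf
      _ ≤ ‖z a - g a‖ + ‖g b - z b‖ := norm_add_le _ _
      _ ≤ δ + δ := add_le_add (by rw [norm_sub_rev]; exact hgz a) (hgz b)
      _ = 2*δ := by ring
    linarith
  refine ⟨g, ?_, fun k => ⟨hgV k, ?_⟩⟩
  · intro j k hjk
    by_contra hne
    rcases Ne.lt_or_gt (fun h : (j:ℕ) = (k:ℕ) => hne (Fin.ext h)) with h | h
    · exact key k j h hjk.symm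
    · exact key j k h hjk
  · have hinner : ⟪g k, l₀⟫ ≥ ⟪z k, l₀⟫ - δ := by
      have hcs : ⟪z k - g k, l₀⟫ ≤ δ := by
        calc ⟪z k - g k, l₀⟫ ≤ ‖z k - g k‖ * ‖l₀‖ := real_inner_le_norm _ _
        _ = ‖g k - z k‖ := by rw [hl₀, mul_one, norm_sub_rev]
        _ ≤ δ := hgz k
      have : ⟪z k, l₀⟫ - ⟪g k, l₀⟫ = ⟪z k - g k, l₀⟫ := (inner_sub_left _ _ _).symm
      linarith
    have hr : 1 - (9*δ*(m-1:ℝ))^2/2 ≤ ⟪z k, l₀⟫ := by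
      rw [hzl k]
      calc 1 - (9*δ*(m-1:ℝ))^2/2 ≤ 1 - (t k)^2/2 := by nlinarith [ht0 k, htmax k]
      _ ≤ _ := inv_sqrt_one_add_sq_ge (t k)
    linarith
end Orth


section Repr2
variable {m : ℕ}
local notation "E" => EuclideanSpace ℝ (Fin m)

set_option maxHeartbeats 1000000 in
lemma repr_lemma (hm : 2 ≤ m) (c a δ : ℝ)
    (hc0 : 0 < c) (hca : c < a) (ha1 : a < 1)
    (hδ0 : 0 < δ) (hδ1 : δ ≤ a - c) (hδ2 : δ ≤ min a (Real.sqrt (1 - a^2)) / 2)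
    (V : Finset E) (hVnorm : ∀ v ∈ V, ‖v‖ = 1)
    (hVnet : ∀ w : E, ‖w‖ = 1 → ∃ v ∈ V, ‖v - w‖ ≤ δ)
    (l₀ : E) (hl₀ : ‖l₀‖ = 1) :
    ∃ f : E → ℝ, (∀ v, 0 ≤ f v) ∧ (∀ v, f v ≠ 0 → v ∈ V ∧ c ≤ ⟪v, l₀⟫) ∧
      l₀ = ∑ v ∈ V, f v • v := by
  classical
  set σ := Real.sqrt (1 - a^2) with hσdef
  have ha0 : 0 < a := hc0.trans hca
  have hσpos : 0 < σ := Real.sqrt_pos.2 (by nlinarith)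
  have hσ2 : σ^2 = 1 - a^2 := Real.sq_sqrt (by nlinarith)
  have hσ1 : σ ≤ 1 := by nlinarith
  set μ := min a σ with hμdef
  have hμa : μ ≤ a := min_le_left _ _
  have hμσ : μ ≤ σ := min_le_right _ _
  have hμpos : 0 < μ := lt_min ha0 hσpos
  have hδμ : δ ≤ μ/2 := hδ2
  set M := 2/μ with hMdef
  have hMpos : 0 < M := by positivity
  set V' := V.filter (fun v => c ≤ ⟪v, l₀⟫) with hV'def
  set φ : (↥V' → ℝ) → E := fun f => ∑ i : ↥V', f i • (i : E) with hφdef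
  set K := {f : ↥V' → ℝ | (∀ i, 0 ≤ f i) ∧ ∑ i, f i ≤ M} with hKdef
  -- compactness of D = φ '' K
  have hKsub : K ⊆ Set.pi Set.univ (fun _ : ↥V' => Set.Icc (0:ℝ) M) := by
    intro f hf i _
    refine ⟨hf.1 i, ?_⟩
    calc f i ≤ ∑ j, f j := Finset.single_le_sum (fun j _ => hf.1 j) (Finset.mem_univ i)
    _ ≤ M := hf.2
  have hKclosed : IsClosed K := by
    have h1 : IsClosed {f : ↥V' → ℝ | ∀ i, 0 ≤ f i} := by
      rw [Set.setOf_forall]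
      exact isClosed_iInter fun i => isClosed_le continuous_const (continuous_apply i)
    have h2 : IsClosed {f : ↥V' → ℝ | ∑ i, f i ≤ M} :=
      isClosed_le (continuous_finset_sum Finset.univ (fun i _ => continuous_apply i))
        continuous_const
    exact h1.inter h2
  have hKcompact : IsCompact K :=
    (isCompact_univ_pi (fun _ => isCompact_Icc)).of_isClosed_subset hKclosed hKsub
  have hφcont : Continuous φ :=
    continuous_finset_sum Finset.univ (fun i _ => (continuous_apply i).smul continuous_const)
  set D := φ '' K with hDdef
  have hDcompact : IsCompact D := hKcompact.image hφcont
  have hDclosed : IsClosed D := hDcompact.isClosed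
  have hφlin : IsLinearMap ℝ φ := by
    constructor
    · intro f g
      rw [hφdef]
      simp only [Pi.add_apply, add_smul]
      rw [Finset.sum_add_distrib]
    · intro r f
      rw [hφdef]
      simp only [Pi.smul_apply, smul_eq_mul, ← smul_smul]
      rw [← Finset.smul_sum]
  have hDconvex : Convex ℝ D := by
    apply Convex.is_linear_image ?_ hφlin
    intro f hf g hg r s hr hs hrs
    constructor
    · intro i
      simp only [Pi.add_apply, Pi.smul_apply, smul_eq_mul]
      have := hf.1 i; have := hg.1 i
      nlinarith
    · have hsum : ∑ i, (r • f + s • g) i = r * (∑ i, f i) + s * (∑ i, g i) := by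
        simp only [Pi.add_apply, Pi.smul_apply, smul_eq_mul]
        rw [Finset.sum_add_distrib, Finset.mul_sum, Finset.mul_sum]
      rw [hsum]
      have h1 : r * (∑ i, f i) ≤ r * M := mul_le_mul_of_nonneg_left hf.2 hr
      have h2 : s * (∑ i, g i) ≤ s * M := mul_le_mul_of_nonneg_left hg.2 hs
      nlinarith
  -- zero in D
  have h0D : (0:E) ∈ D := by
    refine ⟨0, ⟨fun i => le_refl 0, by simp [hMpos.le]⟩, by simp [hφdef]⟩
  -- scaled basis elements in D
  have hMvD : ∀ v (hv : v ∈ V'), M • v ∈ D := by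
    intro v hv
    refine ⟨fun i => if i = ⟨v, hv⟩ then M else 0, ⟨fun i => by positivity, ?_⟩, ?_⟩
    · rw [Finset.sum_ite_eq' Finset.univ (⟨v, hv⟩ : ↥V') (fun _ => M)]
      simp
    · rw [hφdef]
      simp only
      rw [Finset.sum_eq_single (⟨v, hv⟩ : ↥V')]
      · simp
      · intro b _ hb; simp [hb]
      · intro h; exact absurd (Finset.mem_univ _) h
  -- main claim : l₀ ∈ D
  have hl₀D : l₀ ∈ D := by
    by_contra hnot
    obtain ⟨F, u, hFD, hFl⟩ := geometric_hahn_banach_closed_point hDconvex hDclosed hnot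
    set y₀ := (InnerProductSpace.toDual ℝ _).symm F with hy₀def
    have hy₀ : ∀ x : E, ⟪y₀, x⟫ = F x := fun x => InnerProductSpace.toDual_symm_apply
    have hF0 : (0:ℝ) < u := by
      have := hFD 0 h0D
      simpa using this
    have hFl₀pos : 0 < F l₀ := hF0.trans hFl
    have hy₀ne : y₀ ≠ 0 := by
      intro h
      rw [← hy₀ l₀, h] at hFl₀pos
      simp at hFl₀pos
    have hy₀norm : 0 < ‖y₀‖ := norm_pos_iff.2 hy₀ne
    obtain ⟨y, hydef⟩ : ∃ y : E, y = ‖y₀‖⁻¹ • y₀ := ⟨_, rfl⟩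
    have hynorm : ‖y‖ = 1 := by
      rw [hydef, norm_smul, norm_inv, norm_norm, inv_mul_cancel₀ hy₀norm.ne']
    obtain ⟨τ, hτdef⟩ : ∃ τ : ℝ, τ = ⟪y, l₀⟫ := ⟨_, rfl⟩
    have hτpos : 0 < τ := by
      rw [hτdef, hydef, real_inner_smul_left, hy₀ l₀]
      positivity
    have hτle : τ ≤ 1 := by
      rw [hτdef]
      calc ⟪y, l₀⟫ ≤ ‖y‖ * ‖l₀‖ := real_inner_le_norm _ _
      _ = 1 := by rw [hynorm, hl₀, mul_one]
    have hyv : ∀ v, v ∈ V' → ⟪y, v⟫ < 1/M := by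
      intro v hv
      have h1 : F (M • v) < u := hFD _ (hMvD v hv)
      have h2 : F l₀ ≤ ‖y₀‖ := by
        rw [← hy₀ l₀]
        calc ⟪y₀, l₀⟫ ≤ ‖y₀‖ * ‖l₀‖ := real_inner_le_norm _ _
        _ = ‖y₀‖ := by rw [hl₀, mul_one]
      have h3 : M * ⟪y₀, v⟫ < ‖y₀‖ := by
        have := (hy₀ (M • v)) ▸ h1
        rw [real_inner_smul_right] at this
        linarith [hFl, h2, this]
      rw [hydef, real_inner_smul_left]
      rw [lt_div_iff₀ hMpos]
      calc ‖y₀‖⁻¹ * ⟪y₀, v⟫ * M = ‖y₀‖⁻¹ * (M * ⟪y₀, v⟫) := by ring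
      _ < ‖y₀‖⁻¹ * ‖y₀‖ := by
        apply mul_lt_mul_of_pos_left h3 (by positivity)
      _ = 1 := inv_mul_cancel₀ hy₀norm.ne'
    -- construct the cap point w
    obtain ⟨p, ρ, hpnorm, hpl, hρ0, hρ2, hpy⟩ :
        ∃ (p : E) (ρ : ℝ), ‖p‖ = 1 ∧ ⟪l₀, p⟫ = 0 ∧ 0 ≤ ρ ∧ ρ^2 = 1 - τ^2 ∧ ⟪p, y⟫ = ρ := by
      obtain ⟨yp, hyp⟩ : ∃ yp : E, yp = y - τ • l₀ := ⟨_, rfl⟩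
      have hyperp : ⟪yp, l₀⟫ = 0 := by
        rw [hyp, inner_sub_left, real_inner_smul_left, real_inner_self_eq_norm_sq, hl₀,
          ← hτdef]
        ring
      have hyperp2 : ‖yp‖^2 = 1 - τ^2 := by
        have h := norm_sub_sq_real y (τ • l₀)
        rw [hynorm, real_inner_smul_right, norm_smul, hl₀, Real.norm_eq_abs] at h
        rw [hyp, h, ← hτdef]
        rw [show |τ| = τ from abs_of_pos hτpos]
        ring
      by_cases hy0 : yp = 0
      · obtain ⟨p₀, hp₀, hp₀l⟩ := exists_unit_orthogonal hm l₀ hl₀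
        refine ⟨p₀, 0, hp₀, hp₀l, le_refl 0, ?_, ?_⟩
        · rw [hy0] at hyperp2; simp at hyperp2; rw [← hyperp2]; ring
        · have hyeq : y = τ • l₀ := by
            have : y - τ • l₀ = 0 := by rw [← hyp]; exact hy0
            linear_combination (norm := module) this
          rw [hyeq, real_inner_smul_right, real_inner_comm, hp₀l, mul_zero]
      · have hyn : 0 < ‖yp‖ := norm_pos_iff.2 hy0
        refine ⟨‖yp‖⁻¹ • yp, ‖yp‖, ?_, ?_, hyn.le, hyperp2 ▸ rfl, ?_⟩
        · rw [norm_smul, norm_inv, norm_norm, inv_mul_cancel₀ hyn.ne']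
        · rw [real_inner_smul_right, real_inner_comm, hyperp, mul_zero]
        · have hyeq : y = τ • l₀ + yp := by rw [hyp]; abel
          rw [real_inner_smul_left, hyeq, inner_add_right, real_inner_smul_right,
            hyperp, real_inner_self_eq_norm_sq]
          field_simp
          rw [sq]; ring
    obtain ⟨w, hwdef⟩ : ∃ w : E, w = a • l₀ + σ • p := ⟨_, rfl⟩
    have hw2 : ‖w‖^2 = 1 := by
      have h := norm_add_sq_real (a • l₀) (σ • p)
      rw [norm_smul, norm_smul, real_inner_smul_left, real_inner_smul_right, hpl, hl₀,
        hpnorm, Real.norm_eq_abs, Real.norm_eq_abs, abs_of_pos ha0, abs_of_pos hσpos] at h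
      rw [hwdef, h]
      nlinarith
    have hwnorm : ‖w‖ = 1 := by
      rw [← Real.sqrt_sq (norm_nonneg w), hw2, Real.sqrt_one]
    have hpl' : ⟪p, l₀⟫ = 0 := by rw [real_inner_comm]; exact hpl
    have hwl : ⟪w, l₀⟫ = a := by
      rw [hwdef, inner_add_left, real_inner_smul_left, real_inner_smul_left,
        real_inner_self_eq_norm_sq, hl₀, hpl']
      ring
    have hwy : μ ≤ ⟪w, y⟫ := by
      have hly : ⟪l₀, y⟫ = τ := by rw [hτdef, real_inner_comm]
      have h : ⟪w, y⟫ = a * τ + σ * ρ := by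
        rw [hwdef, inner_add_left, real_inner_smul_left, real_inner_smul_left, hpy, hly]
      rw [h]
      have hρ1 : ρ ≤ 1 := by nlinarith
      have hτ1 : (0:ℝ) ≤ 1 - τ := by linarith
      have hρ1' : (0:ℝ) ≤ 1 - ρ := by linarith
      have hsum1 : (0:ℝ) ≤ τ + ρ - 1 := by
        nlinarith [mul_nonneg hτpos.le hτ1, mul_nonneg hρ0 hρ1']
      nlinarith [mul_le_mul_of_nonneg_right hμa hτpos.le,
        mul_le_mul_of_nonneg_right hμσ hρ0, mul_nonneg hμpos.le hsum1]
    obtain ⟨v, hvV, hvw⟩ := hVnet w hwnorm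
    have hwv : ∀ x : E, ‖x‖ = 1 → ⟪w - v, x⟫ ≤ δ := by
      intro x hx
      calc ⟪w - v, x⟫ ≤ ‖w - v‖ * ‖x‖ := real_inner_le_norm _ _
      _ = ‖v - w‖ := by rw [hx, mul_one, norm_sub_rev]
      _ ≤ δ := hvw
    have hvl : c ≤ ⟪v, l₀⟫ := by
      have h1 := hwv l₀ hl₀
      have h2 : ⟪w, l₀⟫ - ⟪v, l₀⟫ = ⟪w - v, l₀⟫ := (inner_sub_left _ _ _).symm
      rw [hwl] at h2
      linarith
    have hvV' : v ∈ V' := by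
      rw [hV'def, Finset.mem_filter]
      exact ⟨hvV, hvl⟩
    have hvy : μ - δ ≤ ⟪y, v⟫ := by
      have h1 := hwv y hynorm
      have h2 : ⟪w, y⟫ - ⟪v, y⟫ = ⟪w - v, y⟫ := (inner_sub_left _ _ _).symm
      rw [real_inner_comm]
      linarith
    have hcontra := hyv v hvV'
    have h1M : 1/M = μ/2 := by rw [hMdef, one_div_div]
    rw [h1M] at hcontra
    linarith
  -- extract the coefficients
  obtain ⟨f, hfK, hφf⟩ := hl₀D
  refine ⟨fun v => if h : v ∈ V' then f ⟨v, h⟩ else 0, ?_, ?_, ?_⟩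
  · intro v
    by_cases h : v ∈ V'
    · simp only [dif_pos h]; exact hfK.1 _
    · simp only [dif_neg h]
      exact le_refl 0
  · intro v hv
    by_cases h : v ∈ V'
    · rw [hV'def, Finset.mem_filter] at h
      exact h
    · simp only [dif_neg h] at hv
      exact absurd rfl hv
  · have step1 : φ f = ∑ i : ↥V', (if h : (i:E) ∈ V' then f ⟨(i:E), h⟩ else 0) • (i : E) := by
      rw [hφdef]
      apply Finset.sum_congr rfl
      intro i _
      rw [dif_pos i.2]
    have step2 : ∑ i : ↥V', (if h : (i:E) ∈ V' then f ⟨(i:E), h⟩ else 0) • (i : E)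
        = ∑ v ∈ V', (if h : v ∈ V' then f ⟨v, h⟩ else 0) • v :=
      Finset.sum_coe_sort V' (fun v => (if h : v ∈ V' then f ⟨v, h⟩ else 0) • v)
    have step3 : ∑ v ∈ V', (if h : v ∈ V' then f ⟨v, h⟩ else 0) • v
        = ∑ v ∈ V, (if h : v ∈ V' then f ⟨v, h⟩ else 0) • v := by
      apply Finset.sum_subset (Finset.filter_subset _ _)
      intro x _ hx
      rw [dif_neg hx, zero_smul]
    rw [← step3, ← step2, ← step1, hφf]

end Repr2


lemma stmt8_m1 (cA : ℝ) (hcA0 : 0 < cA) (hcA1 : cA < 1) :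
    ∃ n_l : ℕ, 1 < n_l ∧
      ∃ l : Fin n_l → EuclideanSpace ℝ (Fin 1),
        (∀ i, ‖l i‖ = 1) ∧
        (∀ f : Fin 1 → Fin n_l, Function.Injective f → LinearIndependent ℝ (l ∘ f)) ∧
        (∀ l0 : EuclideanSpace ℝ (Fin 1), ‖l0‖ = 1 →
          1 ≤ {i : Fin n_l | cA ≤ ⟪l i, l0⟫}.ncard ∧
          ∃ coef : Fin n_l → ℝ, (∀ i, 0 ≤ coef i) ∧
            (∀ i, coef i ≠ 0 → cA ≤ ⟪l i, l0⟫) ∧ l0 = ∑ i, coef i • l i) := by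
  classical
  set e : EuclideanSpace ℝ (Fin 1) := EuclideanSpace.single (0 : Fin 1) (1:ℝ) with hedef
  have hen : ‖e‖ = 1 := by rw [hedef, EuclideanSpace.norm_single]; norm_num
  have he0 : e ≠ 0 := fun h => by rw [h] at hen; simp at hen
  refine ⟨2, one_lt_two, ![e, -e], ?_, ?_, ?_⟩
  · intro i
    fin_cases i <;> simp [hen]
  · intro f hf
    rw [linearIndependent_unique_iff]
    have hne : ∀ j : Fin 2, ![e, -e] j ≠ 0 := by
      intro j
      fin_cases j
      · simpa using he0
      · simpa using he0
    exact hne (f default)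
  · intro l0 hl0
    have habs : |l0 0| = 1 := by
      have h := EuclideanSpace.norm_eq l0
      rw [Fin.sum_univ_one] at h
      rw [hl0] at h
      have : Real.sqrt (‖l0 0‖^2) = 1 := h.symm
      rwa [Real.sqrt_sq_eq_abs, Real.norm_eq_abs, abs_abs] at this
    have hrepr : l0 = (l0 0) • e := by
      ext j
      have hj : j = 0 := Subsingleton.elim j 0
      subst hj
      show l0 0 = (l0 0 • e) 0
      have he00 : e 0 = 1 := by rw [hedef]; simp [EuclideanSpace.single_apply]
      calc l0 0 = l0 0 * e 0 := by rw [he00]; ring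
      _ = (l0 0 • e) 0 := rfl
    have hinner0 : ⟪(![e, -e] : Fin 2 → _) 0, l0⟫ = l0 0 := by
      show ⟪e, l0⟫ = l0 0
      rw [hedef, EuclideanSpace.inner_single_left]
      simp
    have hinner1 : ⟪(![e, -e] : Fin 2 → _) 1, l0⟫ = -(l0 0) := by
      show ⟪-e, l0⟫ = -(l0 0)
      rw [inner_neg_left, hedef, EuclideanSpace.inner_single_left]
      simp
    rcases abs_eq (by norm_num : (0:ℝ) ≤ 1) |>.1 habs with h | h
    · refine ⟨?_, ![1, 0], ?_, ?_, ?_⟩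
      · have hmem : (0 : Fin 2) ∈ {i : Fin 2 | cA ≤ ⟪(![e,-e]) i, l0⟫} := by
          simp only [Set.mem_setOf_eq, hinner0, h]
          linarith
        have : 0 < {i : Fin 2 | cA ≤ ⟪(![e,-e]) i, l0⟫}.ncard :=
          Set.ncard_pos (Set.toFinite _) |>.2 ⟨0, hmem⟩
        omega
      · intro i; fin_cases i <;> norm_num
      · intro i hi
        fin_cases i
        · exact (show cA ≤ ⟪(![e,-e] : Fin 2 → _) 0, l0⟫ by rw [hinner0, h]; linarith)
        · exact absurd (show (![(1:ℝ),0]) 1 = 0 by norm_num) hi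
      · rw [Fin.sum_univ_two]
        simp only [Matrix.cons_val_zero, Matrix.cons_val_one, Matrix.head_cons]
        rw [hrepr, h]
        simp
    · refine ⟨?_, ![0, 1], ?_, ?_, ?_⟩
      · have hmem : (1 : Fin 2) ∈ {i : Fin 2 | cA ≤ ⟪(![e,-e]) i, l0⟫} := by
          simp only [Set.mem_setOf_eq, hinner1, h]
          linarith
        have : 0 < {i : Fin 2 | cA ≤ ⟪(![e,-e]) i, l0⟫}.ncard :=
          Set.ncard_pos (Set.toFinite _) |>.2 ⟨1, hmem⟩
        omega
      · intro i; fin_cases i <;> norm_num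
      · intro i hi
        fin_cases i
        · exact absurd (show (![(0:ℝ),1]) 0 = 0 by norm_num) hi
        · exact (show cA ≤ ⟪(![e,-e] : Fin 2 → _) 1, l0⟫ by rw [hinner1, h]; linarith)
      · rw [Fin.sum_univ_two]
        simp only [Matrix.cons_val_zero, Matrix.cons_val_one, Matrix.head_cons]
        rw [hrepr, h]
        simp


/-- Lemma 3 of the paper: for every `m ≥ 1` and `0 < c_A < 1` there is a positive
basis of unit vectors of `ℝ^m`, in general position (every `m` of them are linearly
independent), such that every unit vector `l₀` is a nonnegative combination of the
basis vectors `l i` with `⟪l i, l₀⟫ ≥ c_A`, of which there are at least `m`. -/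
theorem stmt8 (m : ℕ) (hm : 1 ≤ m) (cA : ℝ) (hcA0 : 0 < cA) (hcA1 : cA < 1) :
    ∃ n_l : ℕ, m < n_l ∧
      ∃ l : Fin n_l → EuclideanSpace ℝ (Fin m),
        (∀ i, ‖l i‖ = 1) ∧
        (∀ f : Fin m → Fin n_l, Function.Injective f → LinearIndependent ℝ (l ∘ f)) ∧
        (∀ l0 : EuclideanSpace ℝ (Fin m), ‖l0‖ = 1 →
          m ≤ {i : Fin n_l | cA ≤ ⟪l i, l0⟫}.ncard ∧
          ∃ coef : Fin n_l → ℝ, (∀ i, 0 ≤ coef i) ∧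
            (∀ i, coef i ≠ 0 → cA ≤ ⟪l i, l0⟫) ∧ l0 = ∑ i, coef i • l i) := by
  classical
  rcases eq_or_lt_of_le hm with hm1 | hm2
  · subst hm1
    exact stmt8_m1 cA hcA0 hcA1
  · have hm2' : 2 ≤ m := hm2
    have hmR : (2:ℝ) ≤ (m:ℝ) := by exact_mod_cast hm2'
    -- constants
    obtain ⟨a, hadef⟩ : ∃ a : ℝ, a = (1 + cA)/2 := ⟨_, rfl⟩
    have hca : cA < a := by rw [hadef]; linarith
    have ha1 : a < 1 := by rw [hadef]; linarith
    have ha0 : 0 < a := hcA0.trans hca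
    obtain ⟨σ, hσdef⟩ : ∃ σ : ℝ, σ = Real.sqrt (1 - a^2) := ⟨_, rfl⟩
    have hσpos : 0 < σ := hσdef ▸ Real.sqrt_pos.2 (by nlinarith)
    obtain ⟨μ, hμdef⟩ : ∃ μ : ℝ, μ = min a σ := ⟨_, rfl⟩
    have hμpos : 0 < μ := hμdef ▸ lt_min ha0 hσpos
    obtain ⟨δ, hδdef⟩ :
        ∃ δ : ℝ, δ = min (μ/2) (min ((1-cA)/(1+41*(m:ℝ)^2)) (1/(9*(m:ℝ)))) := ⟨_, rfl⟩
    have hmpos : (0:ℝ) < m := by linarith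
    have hδ0 : 0 < δ := by
      rw [hδdef]
      refine lt_min (by positivity) (lt_min ?_ (by positivity))
      exact div_pos (by linarith) (by positivity)
    have hδa : δ ≤ μ/2 := hδdef ▸ min_le_left _ _
    have hδb : δ ≤ (1-cA)/(1+41*(m:ℝ)^2) :=
      hδdef ▸ le_trans (min_le_right _ _) (min_le_left _ _)
    have hδc : δ ≤ 1/(9*(m:ℝ)) :=
      hδdef ▸ le_trans (min_le_right _ _) (min_le_right _ _)
    have hδ1 : δ ≤ 1 := by
      refine hδc.trans ?_
      rw [div_le_one (by positivity)]
      linarith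
    have hδac : δ ≤ a - cA := by
      have h2' : (1-cA)/(1+41*(m:ℝ)^2) ≤ (1-cA)/2 :=
        div_le_div_of_nonneg_left (by linarith) (by norm_num) (by nlinarith)
      have : a - cA = (1-cA)/2 := by rw [hadef]; ring
      linarith
    have hδc' : δ * (9*(m:ℝ)) ≤ 1 := by
      rw [← le_div_iff₀ (by positivity)]
      exact hδc
    have hδb' : δ * (1+41*(m:ℝ)^2) ≤ 1 - cA := by
      rw [← le_div_iff₀ (by positivity)]
      exact hδb
    have h1 : 9*δ*((m:ℝ)-1) ≤ 1 := by nlinarith [hδ0.le, hδc']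
    have h2 : cA + δ + (9*δ*((m:ℝ)-1))^2/2 ≤ 1 := by
      have e1 : (9*δ*((m:ℝ)-1))^2 = 81*δ^2*((m:ℝ)-1)^2 := by ring
      have e2 : ((m:ℝ)-1)^2 ≤ (m:ℝ)^2 := by nlinarith
      have e3 : δ^2*((m:ℝ)-1)^2 ≤ δ^2*(m:ℝ)^2 :=
        mul_le_mul_of_nonneg_left e2 (sq_nonneg δ)
      have e4 : δ^2*(m:ℝ)^2 ≤ δ*(m:ℝ)^2 := by
        have : δ^2 ≤ δ := by nlinarith
        exact mul_le_mul_of_nonneg_right this (sq_nonneg _)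
      rw [e1]
      linarith [e3, e4, hδb', hδ0.le]
    -- the net and the family in general position
    obtain ⟨T, hTnorm, hTnet⟩ := exists_net (V := EuclideanSpace ℝ (Fin m)) (δ/2) (by positivity)
    obtain ⟨V, hVnorm, hVcov, hVgp⟩ :=
      exists_gp_family hm (δ/2) (by positivity) (by linarith) T hTnorm
    have hVnet : ∀ w : EuclideanSpace ℝ (Fin m), ‖w‖ = 1 → ∃ v ∈ V, ‖v - w‖ ≤ δ := by
      intro w hw
      obtain ⟨x, hxT, hxw⟩ := hTnet w hw
      obtain ⟨v, hvV, hvx⟩ := hVcov x hxT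
      refine ⟨v, hvV, ?_⟩
      calc ‖v - w‖ ≤ ‖v - x‖ + ‖x - w‖ := norm_sub_le_norm_sub_add_norm_sub _ _ _
      _ ≤ δ/2 + δ/2 := add_le_add hvx hxw
      _ = δ := by ring
    -- index the family
    obtain ⟨l, hldef⟩ : ∃ l : Fin V.card → EuclideanSpace ℝ (Fin m),
        l = fun i => ((V.equivFin.symm i : ↥V) : EuclideanSpace ℝ (Fin m)) := ⟨_, rfl⟩
    have hlV : ∀ i, l i ∈ V := by
      intro i; rw [hldef]; exact (V.equivFin.symm i).2
    have hlinj : Function.Injective l := by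
      rw [hldef]
      exact Subtype.coe_injective.comp V.equivFin.symm.injective
    have hlsurj : ∀ v (hv : v ∈ V), ∃ i, l i = v := by
      intro v hv
      refine ⟨V.equivFin ⟨v, hv⟩, ?_⟩
      rw [hldef]
      simp
    refine ⟨V.card, ?_, l, ?_, ?_, ?_⟩
    · -- m < V.card
      obtain ⟨e₁, he₁⟩ : ∃ e₁ : EuclideanSpace ℝ (Fin m), ‖e₁‖ = 1 :=
        ⟨EuclideanSpace.single ⟨0, by omega⟩ 1, by
          rw [EuclideanSpace.norm_single]; norm_num⟩
      obtain ⟨g, hginj, hg⟩ := count_lemma hm2' cA δ hδ0 V hVnet h1 h2 e₁ he₁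
      obtain ⟨vm, hvmV, hvm⟩ := hVnet (-e₁) (by rw [norm_neg]; exact he₁)
      have hvmlt : ⟪vm, e₁⟫ < cA := by
        have h3 : ⟪vm + e₁, e₁⟫ ≤ δ := by
          calc ⟪vm + e₁, e₁⟫ ≤ ‖vm + e₁‖ * ‖e₁‖ := real_inner_le_norm _ _
          _ = ‖vm - (-e₁)‖ := by rw [he₁, mul_one, sub_neg_eq_add]
          _ ≤ δ := hvm
        have h4 : ⟪vm + e₁, e₁⟫ = ⟪vm, e₁⟫ + 1 := by
          rw [inner_add_left, real_inner_self_eq_norm_sq, he₁]; norm_num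
        linarith
      have hvmne : vm ∉ Finset.image g Finset.univ := by
        intro hmem
        obtain ⟨k, _, hk⟩ := Finset.mem_image.1 hmem
        rw [← hk] at hvmlt
        exact absurd (hg k).2 (not_le.2 hvmlt)
      have hWsub : insert vm (Finset.image g Finset.univ) ⊆ V := by
        intro x hx
        rcases Finset.mem_insert.1 hx with h | h
        · subst h; exact hvmV
        · obtain ⟨k, _, hk⟩ := Finset.mem_image.1 h
          rw [← hk]; exact (hg k).1
      have hWcard : (insert vm (Finset.image g Finset.univ)).card = m + 1 := by
        rw [Finset.card_insert_of_notMem hvmne,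
          Finset.card_image_of_injective _ hginj, Finset.card_univ, Fintype.card_fin]
      have := Finset.card_le_card hWsub
      omega
    · intro i
      exact hVnorm _ (hlV i)
    · -- linear independence
      intro f hfinj
      have hinj : Function.Injective (l ∘ f) := hlinj.comp hfinj
      have hsub : Finset.image (l ∘ f) Finset.univ ⊆ V := by
        intro x hx
        obtain ⟨k, _, hk⟩ := Finset.mem_image.1 hx
        rw [← hk]; exact hlV _
      have hcard : (Finset.image (l ∘ f) Finset.univ).card ≤ m :=
        le_trans Finset.card_image_le (by rw [Finset.card_univ, Fintype.card_fin])
      have hind := hVgp _ hsub hcard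
      have hrange : ((Finset.image (l ∘ f) Finset.univ : Finset _) : Set _)
          = Set.range (l ∘ f) := by
        rw [Finset.coe_image, Finset.coe_univ, Set.image_univ]
      rw [← linearIndepOn_id_range_iff hinj, ← hrange]
      exact linearIndependent_set_coe_iff.1 hind
    · -- representation and count
      intro l0 hl0
      constructor
      · obtain ⟨g, hginj, hg⟩ := count_lemma hm2' cA δ hδ0 V hVnet h1 h2 l0 hl0
        obtain ⟨idx, hidxdef⟩ : ∃ idx : Fin m → Fin V.card,
            idx = fun k => V.equivFin ⟨g k, (hg k).1⟩ := ⟨_, rfl⟩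
        have hlidx : ∀ k, l (idx k) = g k := by
          intro k
          rw [hidxdef, hldef]
          simp
        have hidxinj : Function.Injective idx := by
          intro j k hjk
          apply hginj
          rw [← hlidx j, ← hlidx k, hjk]
        have hsub : Set.range idx ⊆ {i : Fin V.card | cA ≤ ⟪l i, l0⟫} := by
          rintro i ⟨k, rfl⟩
          simp only [Set.mem_setOf_eq, hlidx k]
          exact (hg k).2
        have hcard : (Set.range idx).ncard = m := by
          rw [← Set.image_univ, Set.ncard_image_of_injective _ hidxinj,
            Set.ncard_univ, Nat.card_eq_fintype_card, Fintype.card_fin]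
        exact le_trans (le_of_eq hcard.symm) (Set.ncard_le_ncard hsub (Set.toFinite _))
      · obtain ⟨fc, hfc0, hfcsupp, hfcsum⟩ :=
          repr_lemma hm2' cA a δ hcA0 hca ha1 hδ0 hδac
            (by rw [← hσdef, ← hμdef]; exact hδa) V hVnorm hVnet l0 hl0
        refine ⟨fun i => fc (l i), fun i => hfc0 _, fun i hi => (hfcsupp _ hi).2, ?_⟩
        have hsum : ∑ i, fc (l i) • l i = ∑ v ∈ V, fc v • v := by
          rw [← Finset.sum_coe_sort V (fun v => fc v • v)]
          have := Equiv.sum_comp V.equivFin.symm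
            (fun x : ↥V => fc (x : EuclideanSpace ℝ (Fin m)) • (x : EuclideanSpace ℝ (Fin m)))
          rw [← this]
          apply Finset.sum_congr rfl
          intro i _
          rw [hldef]
        rw [hsum]
        exact hfcsum
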